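/- arXiv:1107.3879 — 3 statements merged into one kernel-verified Lean document; each statement's English description precedes it below -/
import Mathlib

section
/- Let d be a finite index set with |d| ≥ 2 and let c = (c_i)_{i∈d} with each c_i ∈ (0,1) and ∑_{i∈d} c_i > 1. Then the equation 1 − x = ∏_{i∈d} (1 − c_i x) has a unique solution x in the open interval (0,1). -/
open Set

-- affine building block
lemma minc_aux_factor_convex (a b : ℝ) : ConvexOn ℝ (Icc (0:ℝ) 1) (fun x => a - b * x) := by
  constructor
  · exact convex_Icc 0 1
  · intro x _ y _ p q hp hq hpq
    simp only [smul_eq_mul]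
    apply le_of_eq
    linear_combination (-a) * hpq

lemma minc_aux_prod_props {ι : Type*} (c : ι → ℝ) (S : Finset ι)
    (hc : ∀ i ∈ S, c i ∈ Set.Ioo (0 : ℝ) 1) :
    ConvexOn ℝ (Icc (0:ℝ) 1) (fun x => ∏ i ∈ S, (1 - c i * x)) ∧
    AntitoneOn (fun x => ∏ i ∈ S, (1 - c i * x)) (Icc (0:ℝ) 1) ∧
    ∀ x ∈ Icc (0:ℝ) 1, 0 ≤ ∏ i ∈ S, (1 - c i * x) := by
  classical
  induction S using Finset.induction with
  | empty =>
    refine ⟨?_, ?_, ?_⟩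
    · simpa using convexOn_const (1:ℝ) (convex_Icc 0 1)
    · intro x _ y _ _; simp
    · intro x _; simp
  | @insert i S hiS ih =>
    have hci := hc i (Finset.mem_insert_self i S)
    obtain ⟨ihc, iha, ihn⟩ := ih (fun j hj => hc j (Finset.mem_insert_of_mem hj))
    have hfa : AntitoneOn (fun x => 1 - c i * x) (Icc (0:ℝ) 1) := by
      intro x _ y _ hxy
      simp only
      nlinarith [mul_nonneg (le_of_lt hci.1) (sub_nonneg.mpr hxy)]
    have hfn : ∀ x ∈ Icc (0:ℝ) 1, 0 ≤ 1 - c i * x := by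
      intro x hx
      nlinarith [hci.1, hci.2, hx.1, hx.2]
    have hmono : MonovaryOn (fun x => 1 - c i * x) (fun x => ∏ j ∈ S, (1 - c j * x))
        (Icc (0:ℝ) 1) := by
      intro x hx y hy hlt
      rcases le_total x y with h | h
      · exact absurd (iha hx hy h) (not_le.mpr hlt)
      · exact hfa hy hx h
    have hmul := (minc_aux_factor_convex 1 (c i)).mul ihc hfn ihn hmono
    have hfun : (fun x => ∏ j ∈ insert i S, (1 - c j * x)) =
        (fun x => 1 - c i * x) * (fun x => ∏ j ∈ S, (1 - c j * x)) := by
      funext x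
      simp [Finset.prod_insert hiS]
    refine ⟨by rw [hfun]; exact hmul, ?_, ?_⟩
    · intro x hx y hy hxy
      simp only [Finset.prod_insert hiS]
      exact mul_le_mul (hfa hx hy hxy) (iha hx hy hxy) (ihn y hy) (hfn x hx)
    · intro x hx
      simp only [Finset.prod_insert hiS]
      exact mul_nonneg (hfn x hx) (ihn x hx)

lemma minc_aux_neg_near_zero {ι : Type*} (d : Finset ι) (c : ι → ℝ)
    (hc : ∀ i ∈ d, c i ∈ Set.Ioo (0 : ℝ) 1)
    (hsum : 1 < ∑ i ∈ d, c i) (ε : ℝ) (hε : 0 < ε) :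
    ∃ x ∈ Ioo (0:ℝ) ε, (∏ i ∈ d, (1 - c i * x)) - (1 - x) < 0 := by
  classical
  set f : ℝ → ℝ := fun x => (∏ i ∈ d, (1 - c i * x)) - (1 - x) with hf
  have hderiv : HasDerivAt f (1 - ∑ i ∈ d, c i) 0 := by
    have hg : HasDerivAt (fun x => ∏ i ∈ d, (1 - c i * x))
        (∑ i ∈ d, (∏ j ∈ d.erase i, (1 - c j * (0:ℝ))) • (-(c i))) 0 := by
      apply HasDerivAt.fun_finsetProd
      intro i _
      simpa using ((hasDerivAt_id (0:ℝ)).const_mul (c i)).const_sub 1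
    have h1 : HasDerivAt (fun x : ℝ => 1 - x) (-1) 0 := by
      simpa using (hasDerivAt_id (0:ℝ)).const_sub 1
    have := hg.sub h1
    refine HasDerivAt.congr_deriv this ?_
    simp [smul_eq_mul]
    ring
  have hf0 : f 0 = 0 := by simp [hf]
  have hlt : (1 - ∑ i ∈ d, c i) < 0 := by linarith
  have hslope := hasDerivAt_iff_tendsto_slope.mp hderiv
  have hev : ∀ᶠ x in nhdsWithin 0 (Set.Ioi (0:ℝ)), slope f 0 x < 0 :=
    (hslope.mono_left (nhdsWithin_mono 0 (by intro x hx; exact ne_of_gt hx))).eventually_lt_const hlt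
  have hev2 : ∀ᶠ x in nhdsWithin 0 (Set.Ioi (0:ℝ)), x ∈ Ioo (0:ℝ) ε :=
    Filter.eventually_of_mem (Ioo_mem_nhdsGT_of_mem (by simp [hε])) (fun x hx => hx)
  obtain ⟨x, hx1, hx2⟩ := (hev.and hev2).exists
  refine ⟨x, hx2, ?_⟩
  have hxpos : (0:ℝ) < x := hx2.1
  have := hx1
  rw [slope_def_field, hf0] at this
  have : f x / x < 0 := by simpa using this
  have := (div_neg_iff.mp this)
  rcases this with ⟨h1, h2⟩ | ⟨h1, h2⟩
  · linarith
  · exact h1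

lemma minc_aux_no_two_roots {ι : Type*} (d : Finset ι) (c : ι → ℝ)
    (hc : ∀ i ∈ d, c i ∈ Set.Ioo (0 : ℝ) 1)
    (hsum : 1 < ∑ i ∈ d, c i) {y z : ℝ}
    (hy : y ∈ Ioo (0:ℝ) 1) (hz : z ∈ Ioo (0:ℝ) 1) (hyz : y < z)
    (hfy : (∏ i ∈ d, (1 - c i * y)) - (1 - y) = 0)
    (hfz : (∏ i ∈ d, (1 - c i * z)) - (1 - z) = 0) : False := by
  classical
  set f : ℝ → ℝ := fun x => (∏ i ∈ d, (1 - c i * x)) - (1 - x) with hfdef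
  obtain ⟨hgc, -, -⟩ := minc_aux_prod_props c d hc
  have hfc : ConvexOn ℝ (Icc (0:ℝ) 1) f := by
    have h2 := hgc.add (minc_aux_factor_convex (-1) (-1))
    refine (congrArg (ConvexOn ℝ (Icc (0:ℝ) 1)) ?_).mpr h2
    funext x
    simp [hfdef]
    ring
  obtain ⟨x₀, hx₀, hfx₀⟩ := minc_aux_neg_near_zero d c hc hsum y hy.1
  set a : ℝ := (z - y) / (z - x₀) with ha
  set b : ℝ := (y - x₀) / (z - x₀) with hb
  have hzx₀ : 0 < z - x₀ := by linarith [hx₀.2]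
  have hA : 0 < a := div_pos (by linarith) hzx₀
  have hB : 0 ≤ b := div_nonneg (by linarith [hx₀.2]) hzx₀.le
  have hab : a + b = 1 := by rw [ha, hb]; field_simp; ring
  have hcomb : a • x₀ + b • z = y := by
    simp only [smul_eq_mul, ha, hb]
    field_simp
    ring
  have hx₀m : x₀ ∈ Icc (0:ℝ) 1 := ⟨hx₀.1.le, by linarith [hx₀.2, hy.2]⟩
  have hzm : z ∈ Icc (0:ℝ) 1 := ⟨hz.1.le, hz.2.le⟩
  have hkey := hfc.2 hx₀m hzm hA.le hB hab
  rw [hcomb] at hkey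
  have hfy' : f y = 0 := hfy
  have hfz' : f z = 0 := hfz
  rw [hfy', hfz'] at hkey
  simp only [smul_eq_mul, mul_zero, add_zero] at hkey
  have hfx₀' : f x₀ < 0 := hfx₀
  linarith [mul_neg_of_pos_of_neg hA hfx₀']

/-- MINC Lemma 1: the likelihood equation `1 - x = ∏ (1 - c i * x)` has a unique
solution in `(0,1)` when each `c i ∈ (0,1)` and `∑ c i > 1`. -/
theorem minc_unique_solution {ι : Type*} (d : Finset ι) (c : ι → ℝ)
    (hcard : 2 ≤ d.card)
    (hc : ∀ i ∈ d, c i ∈ Set.Ioo (0 : ℝ) 1)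
    (hsum : 1 < ∑ i ∈ d, c i) :
    ∃! x : ℝ, x ∈ Set.Ioo (0 : ℝ) 1 ∧ 1 - x = ∏ i ∈ d, (1 - c i * x) := by
  classical
  set f : ℝ → ℝ := fun x => (∏ i ∈ d, (1 - c i * x)) - (1 - x) with hfdef
  obtain ⟨x₀, hx₀, hfx₀⟩ := minc_aux_neg_near_zero d c hc hsum 1 one_pos
  have hcont : Continuous f := by
    apply Continuous.sub
    · exact continuous_finset_prod d (fun i _ => by continuity)
    · continuity
  have hf1 : 0 < f 1 := by
    have : 0 < ∏ i ∈ d, (1 - c i * 1) := by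
      apply Finset.prod_pos
      intro i hi
      have := hc i hi
      nlinarith [this.2]
    simpa [hfdef] using this
  have hsub := intermediate_value_Ioo (le_of_lt hx₀.2) hcont.continuousOn
  have h0mem : (0:ℝ) ∈ Ioo (f x₀) (f 1) := ⟨hfx₀, hf1⟩
  obtain ⟨x, hx, hfx⟩ := hsub h0mem
  have hxIoo : x ∈ Ioo (0:ℝ) 1 := ⟨lt_trans hx₀.1 hx.1, hx.2⟩
  refine ⟨x, ⟨hxIoo, ?_⟩, ?_⟩
  · have : f x = 0 := hfx
    simp only [hfdef] at this
    linarith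
  · rintro y ⟨hyIoo, hyeq⟩
    have hfy : f y = 0 := by simp only [hfdef]; linarith
    have hfx0 : f x = 0 := hfx
    by_contra hne
    rcases lt_or_gt_of_ne hne with h | h
    · exact minc_aux_no_two_roots d c hc hsum hyIoo hxIoo h hfy hfx0
    · exact minc_aux_no_two_roots d c hc hsum hxIoo hyIoo h hfx0 hfy
end

section
/- Let h(x) = (1 − x) − ∏_{i∈d}(1 − c_i x) with c_i ∈ (0,1) for all i in the finite set d, |d| ≥ 2. Then h(0) = 0 and h'(0) = (∑_{i∈d} c_i) − 1. Consequently, if ∑_{i∈d} c_i = 1 then 0 is a root of h of multiplicity at least 2, and h has no root in (0,1) (h(x) < 0 for all x ∈ (0,1)). -/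
open Finset

lemma weierstrass_aux {ι : Type*} (d : Finset ι) (a : ι → ℝ)
    (ha : ∀ i ∈ d, a i ∈ Set.Ioo (0 : ℝ) 1) :
    1 - ∑ i ∈ d, a i ≤ ∏ i ∈ d, (1 - a i) := by
  classical
  induction d using Finset.induction with
  | empty => simp
  | @insert j s hi ih =>
    rw [Finset.sum_insert hi, Finset.prod_insert hi]
    have haj := ha j (Finset.mem_insert_self j s)
    have hrec := ih (fun i hi' => ha i (Finset.mem_insert_of_mem hi'))
    have hS : 0 ≤ ∑ i ∈ s, a i :=
      Finset.sum_nonneg fun i hi' => le_of_lt (ha i (Finset.mem_insert_of_mem hi')).1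
    nlinarith [haj.1, haj.2, mul_nonneg (le_of_lt haj.1) hS]

lemma weierstrass_strict {ι : Type*} (d : Finset ι) (a : ι → ℝ)
    (hcard : 2 ≤ d.card)
    (ha : ∀ i ∈ d, a i ∈ Set.Ioo (0 : ℝ) 1) :
    1 - ∑ i ∈ d, a i < ∏ i ∈ d, (1 - a i) := by
  classical
  obtain ⟨i, hi⟩ : d.Nonempty := Finset.card_pos.mp (by omega)
  have h1 : 1 ≤ (d.erase i).card := by
    have := Finset.card_erase_of_mem hi; omega
  obtain ⟨j, hj⟩ : (d.erase i).Nonempty := Finset.card_pos.mp (by omega)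
  set s := (d.erase i).erase j with hs
  have hji : j ≠ i := (Finset.mem_erase.mp hj).1
  have hjd : j ∈ d := (Finset.mem_erase.mp hj).2
  have hd : d = insert i (insert j s) := by
    rw [hs, Finset.insert_erase hj, Finset.insert_erase hi]
  have hins : i ∉ insert j s := by
    simp [hs, hji.symm, Finset.mem_erase]
  have hjs : j ∉ s := by simp [hs]
  have hsd : ∀ k ∈ s, k ∈ d := fun k hk =>
    Finset.mem_of_mem_erase (Finset.mem_of_mem_erase hk)
  have hP : 1 - ∑ k ∈ s, a k ≤ ∏ k ∈ s, (1 - a k) :=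
    weierstrass_aux s a fun k hk => ha k (hsd k hk)
  have hS : 0 ≤ ∑ k ∈ s, a k :=
    Finset.sum_nonneg fun k hk => le_of_lt (ha k (hsd k hk)).1
  have hai := ha i hi
  have haj := ha j hjd
  rw [hd, Finset.sum_insert hins, Finset.prod_insert hins,
    Finset.sum_insert hjs, Finset.prod_insert hjs]
  have hQpos : 0 < (1 - a i) * (1 - a j) :=
    mul_pos (by linarith [hai.2]) (by linarith [haj.2])
  have hQle : (1 - a i) * (1 - a j) ≤ 1 := by nlinarith [hai.1, hai.2, haj.1, haj.2]
  nlinarith [mul_le_mul_of_nonneg_left hP (le_of_lt hQpos),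
    mul_pos hai.1 haj.1, mul_nonneg (sub_nonneg.mpr hQle) hS]

/-- No-solution phenomenon: `h(0) = 0`, `h'(0) = ∑ c i − 1`; if `∑ c i = 1` then `0`
is a root of multiplicity at least two and `h < 0` on `(0,1)`. -/
theorem no_solution_complete_exclusion {ι : Type*} (d : Finset ι) (c : ι → ℝ)
    (hcard : 2 ≤ d.card)
    (hc : ∀ i ∈ d, c i ∈ Set.Ioo (0 : ℝ) 1) :
    (fun x : ℝ => (1 - x) - ∏ i ∈ d, (1 - c i * x)) 0 = 0 ∧
    deriv (fun x : ℝ => (1 - x) - ∏ i ∈ d, (1 - c i * x)) 0 = (∑ i ∈ d, c i) - 1 ∧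
    ((∑ i ∈ d, c i) = 1 →
      deriv (fun x : ℝ => (1 - x) - ∏ i ∈ d, (1 - c i * x)) 0 = 0 ∧
      ∀ x ∈ Set.Ioo (0 : ℝ) 1, (1 - x) - ∏ i ∈ d, (1 - c i * x) < 0) := by
  classical
  have hprod : HasDerivAt (fun x : ℝ => ∏ i ∈ d, (1 - c i * x))
      (∑ i ∈ d, (∏ j ∈ d.erase i, (1 - c j * (0:ℝ))) • (-c i)) 0 := by
    apply HasDerivAt.fun_finsetProd
    intro i _
    simpa using ((hasDerivAt_id (0:ℝ)).const_mul (c i)).const_sub 1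
  have hsum : (∑ i ∈ d, (∏ j ∈ d.erase i, (1 - c j * (0:ℝ))) • (-c i)) = -∑ i ∈ d, c i := by
    simp [Finset.sum_neg_distrib]
  rw [hsum] at hprod
  have hh : HasDerivAt (fun x : ℝ => (1 - x) - ∏ i ∈ d, (1 - c i * x))
      (-1 - -∑ i ∈ d, c i) 0 :=
    (((hasDerivAt_id (0:ℝ)).const_sub 1)).sub hprod
  have hderiv : deriv (fun x : ℝ => (1 - x) - ∏ i ∈ d, (1 - c i * x)) 0
      = (∑ i ∈ d, c i) - 1 := by
    rw [hh.deriv]; ring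
  refine ⟨by simp, hderiv, fun hsum1 => ⟨by rw [hderiv, hsum1]; ring, ?_⟩⟩
  intro x hx
  have := weierstrass_strict d (fun i => c i * x) hcard
    (fun i hi => ⟨mul_pos (hc i hi).1 hx.1,
      by show c i * x < 1; nlinarith [(hc i hi).2, hx.2, mul_pos (sub_pos.mpr (hc i hi).2) hx.1]⟩)
  have hsx : ∑ i ∈ d, c i * x = x := by
    rw [← Finset.sum_mul, hsum1, one_mul]
  rw [hsx] at this
  linarith
end

section
/- Let S be a finite set of sources all observing a common subtree, and suppose the per-source likelihood equations are 1 − x_s = ∏_{j∈d}(1 − c_j x_s) for every s ∈ S with the same coefficients c_j ∈ (0,1), ∑ c_j > 1. If x_s, x_t ∈ (0,1) are solutions for sources s, t, then x_s = x_t; moreover, if x_s = γ_s/A_s and x_t = γ_t/A_t for positive reals γ_s, γ_t, A_s, A_t, then A_t = (γ_t/γ_s)·A_s. -/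
/-- Exact identity: the deficit is `t*(1-t)*(b-a)*(B-A) ≥ 0`. -/
private lemma combo_ineq {a b A B t : ℝ} (hab : a ≤ b) (hAB : A ≤ B)
    (ht0 : 0 ≤ t) (ht1 : t ≤ 1) :
    (t * a + (1 - t) * b) * (t * A + (1 - t) * B) ≤ t * (a * A) + (1 - t) * (b * B) := by
  nlinarith [mul_nonneg (mul_nonneg (mul_nonneg ht0 (by linarith : (0:ℝ) ≤ 1 - t))
      (by linarith : (0:ℝ) ≤ b - a)) (by linarith : (0:ℝ) ≤ B - A)]

private lemma combo_ineq_strict {a b A B t : ℝ} (hab : a < b) (hAB : A < B)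
    (ht0 : 0 < t) (ht1 : t < 1) :
    (t * a + (1 - t) * b) * (t * A + (1 - t) * B) < t * (a * A) + (1 - t) * (b * B) := by
  nlinarith [mul_pos (mul_pos (mul_pos ht0 (by linarith : (0:ℝ) < 1 - t))
      (by linarith : (0:ℝ) < b - a)) (by linarith : (0:ℝ) < B - A)]

/-- Weak convexity of a product of nonnegative linear interpolations. -/
private lemma prod_combo_le {ι : Type*} (d : Finset ι) (u v : ι → ℝ)
    (hu : ∀ j ∈ d, 0 ≤ u j) (huv : ∀ j ∈ d, u j ≤ v j)
    {t : ℝ} (ht0 : 0 ≤ t) (ht1 : t ≤ 1) :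
    ∏ j ∈ d, (t * u j + (1 - t) * v j) ≤
      t * ∏ j ∈ d, u j + (1 - t) * ∏ j ∈ d, v j := by
  classical
  induction d using Finset.induction_on with
  | empty => simp
  | insert i s hi ih =>
    have hu' : ∀ j ∈ s, 0 ≤ u j := fun j hj => hu j (Finset.mem_insert_of_mem hj)
    have huv' : ∀ j ∈ s, u j ≤ v j := fun j hj => huv j (Finset.mem_insert_of_mem hj)
    have hP := ih hu' huv'
    have hU : 0 ≤ ∏ j ∈ s, u j := Finset.prod_nonneg hu'
    have hUV : ∏ j ∈ s, u j ≤ ∏ j ∈ s, v j :=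
      Finset.prod_le_prod hu' huv'
    have hui : 0 ≤ u i := hu i (Finset.mem_insert_self i s)
    have huvi : u i ≤ v i := huv i (Finset.mem_insert_self i s)
    have hfac : 0 ≤ t * u i + (1 - t) * v i := by nlinarith
    rw [Finset.prod_insert hi, Finset.prod_insert hi, Finset.prod_insert hi]
    calc (t * u i + (1 - t) * v i) * ∏ j ∈ s, (t * u j + (1 - t) * v j)
        ≤ (t * u i + (1 - t) * v i) *
            (t * ∏ j ∈ s, u j + (1 - t) * ∏ j ∈ s, v j) :=
          mul_le_mul_of_nonneg_left hP hfac
      _ ≤ t * (u i * ∏ j ∈ s, u j) + (1 - t) * (v i * ∏ j ∈ s, v j) :=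
          combo_ineq huvi hUV ht0 ht1

/-- Strict convexity when there are at least two factors, all strict. -/
private lemma prod_combo_lt {ι : Type*} (d : Finset ι) (hd : 2 ≤ d.card)
    (u v : ι → ℝ)
    (hu : ∀ j ∈ d, 0 < u j) (huv : ∀ j ∈ d, u j < v j)
    {t : ℝ} (ht0 : 0 < t) (ht1 : t < 1) :
    ∏ j ∈ d, (t * u j + (1 - t) * v j) <
      t * ∏ j ∈ d, u j + (1 - t) * ∏ j ∈ d, v j := by
  classical
  obtain ⟨i, hi⟩ : d.Nonempty := Finset.card_pos.mp (by omega)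
  set s := d.erase i with hs
  have hins : d = insert i s := (Finset.insert_erase hi).symm
  have his : i ∉ s := Finset.notMem_erase i d
  have hsne : s.Nonempty := by
    rw [← Finset.card_pos, hs, Finset.card_erase_of_mem hi]; omega
  have hu' : ∀ j ∈ s, 0 < u j := fun j hj => hu j (Finset.mem_of_mem_erase hj)
  have huv' : ∀ j ∈ s, u j < v j := fun j hj => huv j (Finset.mem_of_mem_erase hj)
  have hP : ∏ j ∈ s, (t * u j + (1 - t) * v j) ≤
      t * ∏ j ∈ s, u j + (1 - t) * ∏ j ∈ s, v j :=
    prod_combo_le s u v (fun j hj => (hu' j hj).le) (fun j hj => (huv' j hj).le)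
      ht0.le ht1.le
  have hU : 0 < ∏ j ∈ s, u j := Finset.prod_pos hu'
  have hUV : ∏ j ∈ s, u j < ∏ j ∈ s, v j :=
    Finset.prod_lt_prod_of_nonempty hu' huv' hsne
  have hui : 0 < u i := hu i hi
  have huvi : u i < v i := huv i hi
  have hfac : 0 < t * u i + (1 - t) * v i := by nlinarith
  rw [hins, Finset.prod_insert his, Finset.prod_insert his, Finset.prod_insert his]
  calc (t * u i + (1 - t) * v i) * ∏ j ∈ s, (t * u j + (1 - t) * v j)
      ≤ (t * u i + (1 - t) * v i) *
          (t * ∏ j ∈ s, u j + (1 - t) * ∏ j ∈ s, v j) :=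
        mul_le_mul_of_nonneg_left hP hfac.le
    _ < t * (u i * ∏ j ∈ s, u j) + (1 - t) * (v i * ∏ j ∈ s, v j) :=
        combo_ineq_strict huvi hUV ht0 ht1

/-- No two distinct solutions in `(0,1)`. -/
private lemma no_two_solutions {ι : Type*} (d : Finset ι) (c : ι → ℝ)
    (hc : ∀ j ∈ d, c j ∈ Set.Ioo (0 : ℝ) 1)
    (hsum : 1 < ∑ j ∈ d, c j)
    (a b : ℝ) (ha : a ∈ Set.Ioo (0 : ℝ) 1) (hb : b ∈ Set.Ioo (0 : ℝ) 1)
    (hab : a < b)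
    (hea : 1 - a = ∏ j ∈ d, (1 - c j * a))
    (heb : 1 - b = ∏ j ∈ d, (1 - c j * b)) : False := by
  obtain ⟨ha0, ha1⟩ := ha
  obtain ⟨hb0, hb1⟩ := hb
  have hdne : d.Nonempty := by
    rcases d.eq_empty_or_nonempty with h | h
    · rw [h] at hsum; simp at hsum; linarith
    · exact h
  have hcard : 2 ≤ d.card := by
    by_contra h
    push_neg at h
    interval_cases hcd : d.card
    · exact hdne.ne_empty (Finset.card_eq_zero.mp hcd)
    · obtain ⟨j, hj⟩ := Finset.card_eq_one.mp hcd
      rw [hj, Finset.sum_singleton] at hsum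
      have := (hc j (by simp [hj])).2
      linarith
  set t := a / b with htdef
  have ht0 : 0 < t := div_pos ha0 hb0
  have ht1 : t < 1 := (div_lt_one hb0).mpr hab
  have key := prod_combo_lt d hcard (fun j => 1 - c j * b) (fun _ => 1)
    (fun j hj => by
      have h1 := (hc j hj).1; have h2 := (hc j hj).2; nlinarith)
    (fun j hj => by
      have h1 := (hc j hj).1; nlinarith)
    ht0 ht1
  have htb : t * b = a := by rw [htdef]; field_simp
  have hprod1 : ∏ j ∈ d, (t * (1 - c j * b) + (1 - t) * 1) =
      ∏ j ∈ d, (1 - c j * a) := by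
    refine Finset.prod_congr rfl fun j hj => ?_
    linear_combination (-(c j)) * htb
  rw [hprod1, Finset.prod_const_one, ← hea, ← heb] at key
  have : t * (1 - b) + (1 - t) * 1 = 1 - a := by
    linear_combination -htb
  rw [this] at key
  exact lt_irrefl _ key

/-- Multi-source proportionality: identical per-source likelihood equations give the
same shared-subtree pass rate, and path pass rates are proportional to end-to-end
empirical pass rates. -/
theorem multisource_proportionality {ι : Type*} (d : Finset ι) (c : ι → ℝ)
    (hc : ∀ j ∈ d, c j ∈ Set.Ioo (0 : ℝ) 1)
    (hsum : 1 < ∑ j ∈ d, c j)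
    (xs xt : ℝ) (hxs : xs ∈ Set.Ioo (0 : ℝ) 1) (hxt : xt ∈ Set.Ioo (0 : ℝ) 1)
    (hes : 1 - xs = ∏ j ∈ d, (1 - c j * xs))
    (het : 1 - xt = ∏ j ∈ d, (1 - c j * xt)) :
    xs = xt ∧
    ∀ γs γt As At : ℝ, 0 < γs → 0 < γt → 0 < As → 0 < At →
      xs = γs / As → xt = γt / At → At = (γt / γs) * As := by
  have heq : xs = xt := by
    rcases lt_trichotomy xs xt with h | h | h
    · exact absurd (no_two_solutions d c hc hsum xs xt hxs hxt h hes het) id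
    · exact h
    · exact absurd (no_two_solutions d c hc hsum xt xs hxt hxs h het hes) id
  refine ⟨heq, fun γs γt As At hγs hγt hAs hAt hs ht => ?_⟩
  have : γs / As = γt / At := by rw [← hs, ← ht, heq]
  field_simp at this ⊢
  nlinarith [this]
end
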